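/- Let (X, f, ε) be an exterior discrete semi-flow. If X is Lagrange stable at every point of PA(L(X)) and L(X) = L̄(X), then D(X) = PA(L(X)) = A(L(X)). -/

import Mathlib

open Set Topology

/-- The omega-limit set of a point `x` under the discrete semi-flow generated by `f`:
`Λ(x) = ⋂ₙ closure {f^[m] x : m ≥ n}`. -/
def Lambda {X : Type*} [TopologicalSpace X] (f : X → X) (x : X) : Set X :=
  ⋂ n : ℕ, closure ((fun m => f^[m] x) '' Set.Ici n)

/-- The omega-limit set of a subset `S`: `Λ(S) = ⋃_{x ∈ S} Λ(x)`. -/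
def LambdaSet {X : Type*} [TopologicalSpace X] (f : X → X) (S : Set X) : Set X :=
  ⋃ x ∈ S, Lambda f x

/-- The region of pseudo-attraction of `S`: `PA(S) = {x : Λ(x) ⊆ S}`. -/
def PA {X : Type*} [TopologicalSpace X] (f : X → X) (S : Set X) : Set X :=
  {x | Lambda f x ⊆ S}

/-- The region of weak-attraction of `S`: `WA(S) = {x : Λ(x) ∩ S ≠ ∅}`. -/
def WA {X : Type*} [TopologicalSpace X] (f : X → X) (S : Set X) : Set X :=
  {x | (Lambda f x ∩ S).Nonempty}

/-- The region of attraction of `S`: `A(S) = {x : ∅ ≠ Λ(x) ⊆ S}`. -/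
def RA {X : Type*} [TopologicalSpace X] (f : X → X) (S : Set X) : Set X :=
  {x | (Lambda f x).Nonempty ∧ Lambda f x ⊆ S}

/-- `X` is (positively) Lagrange stable at `x` if the closure of the trajectory of `x`
is compact. -/
def LagrangeStableAt {X : Type*} [TopologicalSpace X] (f : X → X) (x : X) : Prop :=
  IsCompact (closure (Set.range fun n : ℕ => f^[n] x))

/-- An externology on a topological space: a nonempty family of open sets closed under
finite intersections such that any open set containing a member belongs to the family. -/
def IsExternology {X : Type*} [TopologicalSpace X] (ε : Set (Set X)) : Prop :=
  ε.Nonempty ∧ (∀ E ∈ ε, IsOpen E) ∧ (∀ E ∈ ε, ∀ F ∈ ε, E ∩ F ∈ ε) ∧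
    (∀ E ∈ ε, ∀ U : Set X, IsOpen U → E ⊆ U → U ∈ ε)

/-- The limit space of an externology: `L(X) = ⋂_{E ∈ ε} E`. -/
def limitSpace {X : Type*} (ε : Set (Set X)) : Set X := ⋂ E ∈ ε, E

/-- The bar-limit space of an externology: `L̄(X) = ⋂_{E ∈ ε} closure E`. -/
def barLimit {X : Type*} [TopologicalSpace X] (ε : Set (Set X)) : Set X :=
  ⋂ E ∈ ε, closure E

/-- The region of pseudo-attraction of the externology:
`D(X) = {x : ∀ E ∈ ε, f^[m] x ∈ E for all large m}`. -/
def Dregion {X : Type*} (f : X → X) (ε : Set (Set X)) : Set X :=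
  {x | ∀ E ∈ ε, ∃ n : ℕ, ∀ m ≥ n, f^[m] x ∈ E}

/-- The region of pseudo-bar-attraction of the externology:
`D̄(X) = {x : ∀ E ∈ ε, f^[m] x ∈ closure E for all large m}`. -/
def Dbar {X : Type*} [TopologicalSpace X] (f : X → X) (ε : Set (Set X)) : Set X :=
  {x | ∀ E ∈ ε, ∃ n : ℕ, ∀ m ≥ n, f^[m] x ∈ closure E}

/-- A right-absorbing open subset: an open set that eventually contains the trajectory
of every point. -/
def RightAbsorbing {X : Type*} [TopologicalSpace X] (f : X → X) (E : Set X) : Prop :=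
  IsOpen E ∧ ∀ y : X, ∃ n : ℕ, ∀ m ≥ n, f^[m] y ∈ E

/-- A point `x` is periodic if `f^[n] x = x` for some `n ≥ 1`. -/
def IsPeriodicPoint {X : Type*} (f : X → X) (x : X) : Prop := ∃ n ≥ 1, f^[n] x = x

theorem stmt10 {X : Type*} [TopologicalSpace X] (f : X → X) (hf : Continuous f)
    (ε : Set (Set X)) (hε : IsExternology ε) (hflow : ∀ E ∈ ε, f ⁻¹' E ∈ ε)
    (hL : ∀ x ∈ PA f (limitSpace ε), LagrangeStableAt f x)
    (hLbar : limitSpace ε = barLimit ε) :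
    Dregion f ε = PA f (limitSpace ε) ∧ PA f (limitSpace ε) = RA f (limitSpace ε) := by
  obtain ⟨hne, hopen, hinter, hup⟩ := hε
  have hDsub : Dregion f ε ⊆ PA f (limitSpace ε) := by
    intro x hx
    rw [PA, mem_setOf_eq, hLbar]
    intro y hy
    simp only [barLimit, mem_iInter]
    intro E hE
    obtain ⟨n, hn⟩ := hx E hE
    have hsub : Lambda f x ⊆ closure E :=
      calc Lambda f x ⊆ closure ((fun m => f^[m] x) '' Set.Ici n) := iInter_subset _ n
        _ ⊆ closure E := closure_mono (by rintro _ ⟨m, hm, rfl⟩; exact hn m hm)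
    exact hsub hy
  have hPAsubD : PA f (limitSpace ε) ⊆ Dregion f ε := by
    intro x hx E hE
    by_contra h
    push_neg at h
    have hK := hL x hx
    let T : ℕ → Set X := fun n => closure ((fun m => f^[m] x) '' {m | n ≤ m ∧ f^[m] x ∉ E})
    have hTsub : ∀ n, T n ⊆ closure (Set.range fun n : ℕ => f^[n] x) := by
      intro n
      show closure ((fun m => f^[m] x) '' {m | n ≤ m ∧ f^[m] x ∉ E})
        ⊆ closure (Set.range fun n : ℕ => f^[n] x)
      apply closure_mono
      rintro _ ⟨m, hm, rfl⟩
      exact mem_range_self m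
    have hTne : ∀ n, (T n).Nonempty := by
      intro n
      obtain ⟨m, hm, hmE⟩ := h n
      refine ⟨f^[m] x, ?_⟩
      show f^[m] x ∈ closure ((fun m => f^[m] x) '' {m | n ≤ m ∧ f^[m] x ∉ E})
      exact subset_closure ⟨m, ⟨hm, hmE⟩, rfl⟩
    have hTdec : ∀ n, T (n + 1) ⊆ T n := by
      intro n
      show closure ((fun m => f^[m] x) '' {m | n + 1 ≤ m ∧ f^[m] x ∉ E})
        ⊆ closure ((fun m => f^[m] x) '' {m | n ≤ m ∧ f^[m] x ∉ E})
      exact closure_mono (image_mono (fun m hm => ⟨Nat.le_of_succ_le hm.1, hm.2⟩))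
    have hT0 : IsCompact (T 0) := hK.of_isClosed_subset isClosed_closure (hTsub 0)
    have hint : (⋂ n, T n).Nonempty :=
      IsCompact.nonempty_iInter_of_sequence_nonempty_isCompact_isClosed T hTdec hTne hT0
        (fun n => isClosed_closure)
    obtain ⟨y, hy⟩ := hint
    have hyL : y ∈ Lambda f x := by
      simp only [Lambda, mem_iInter]
      intro n
      have hyn : y ∈ closure ((fun m => f^[m] x) '' {m | n ≤ m ∧ f^[m] x ∉ E}) :=
        mem_iInter.mp hy n
      exact closure_mono (image_mono (fun m hm => hm.1)) hyn
    have hyE : y ∉ E := by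
      have hy0 : y ∈ closure ((fun m => f^[m] x) '' {m | 0 ≤ m ∧ f^[m] x ∉ E}) :=
        mem_iInter.mp hy 0
      have hcl : y ∈ closure Eᶜ :=
        closure_mono (by rintro _ ⟨m, hm, rfl⟩; exact hm.2) hy0
      rwa [IsClosed.closure_eq (hopen E hE).isClosed_compl] at hcl
    exact hyE (mem_iInter₂.mp (hx hyL) E hE)
  have hPAne : ∀ x ∈ PA f (limitSpace ε), (Lambda f x).Nonempty := by
    intro x hx
    have hK := hL x hx
    have hS0 : closure ((fun m => f^[m] x) '' Set.Ici 0)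
        = closure (Set.range fun n : ℕ => f^[n] x) := by
      have him : (fun m => f^[m] x) '' Set.Ici 0 = Set.range fun n : ℕ => f^[n] x := by
        ext y
        constructor
        · rintro ⟨m, _, rfl⟩; exact ⟨m, rfl⟩
        · rintro ⟨m, rfl⟩; exact ⟨m, Nat.zero_le m, rfl⟩
      rw [him]
    have hres : (⋂ n, closure ((fun m => f^[m] x) '' Set.Ici n)).Nonempty :=
      IsCompact.nonempty_iInter_of_sequence_nonempty_isCompact_isClosed _
        (fun n => closure_mono (image_mono (fun m hm => Nat.le_of_succ_le hm)))
        (fun n => ⟨f^[n] x, subset_closure ⟨n, le_refl n, rfl⟩⟩)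
        (by rw [hS0]; exact hK)
        (fun n => isClosed_closure)
    exact hres
  refine ⟨subset_antisymm hDsub hPAsubD, ?_⟩
  ext x
  exact ⟨fun hx => ⟨hPAne x hx, hx⟩, fun hx => hx.2⟩
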